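/- Let τ be a family of trapezoids with all coordinates distinct. The maximum size of an induced matching in the trapezoid graph G(τ) equals the maximum length of a chain of matches under the relation e < e' iff max(A.x₂,B.x₂) < min(A'.x₁,B'.x₁) and max(A.y₂,B.y₂) < min(A'.y₁,B'.y₁). -/

import Mathlib

structure Trapezoid where
  x1 : ℝ
  x2 : ℝ
  y1 : ℝ
  y2 : ℝ
  hx : x1 ≤ x2
  hy : y1 ≤ y2

def SegCross (a b c d : ℝ) : Prop := (a - c) * (b - d) < 0

def TrapIntersect (A B : Trapezoid) : Prop :=
  SegCross A.x1 A.y2 B.x1 B.y2 ∨ SegCross A.x1 A.y2 B.x2 B.y1 ∨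
    SegCross A.x2 A.y1 B.x1 B.y2 ∨ SegCross A.x2 A.y1 B.x2 B.y1

/-- The trapezoid graph `G(τ)`: vertices are the trapezoids of `τ`, edges are intersecting
pairs. -/
def trapGraph (τ : Set Trapezoid) : SimpleGraph τ where
  Adj A B := A ≠ B ∧ TrapIntersect A B
  symm := by
    constructor
    intro A B ⟨hne, h⟩
    refine ⟨hne.symm, ?_⟩
    rcases h with h | h | h | h
    · exact Or.inl (by unfold SegCross at *; nlinarith)
    · exact Or.inr (Or.inr (Or.inl (by unfold SegCross at *; nlinarith)))
    · exact Or.inr (Or.inl (by unfold SegCross at *; nlinarith))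
    · exact Or.inr (Or.inr (Or.inr (by unfold SegCross at *; nlinarith)))
  loopless := by constructor; intro A h; exact h.1 rfl

def DistinctCoords (τ : Set Trapezoid) : Prop :=
  ∀ A ∈ τ, ∀ B ∈ τ, A ≠ B →
    ([A.x1, A.x2, B.x1, B.x2] : List ℝ).Pairwise (· ≠ ·) ∧
    ([A.y1, A.y2, B.y1, B.y2] : List ℝ).Pairwise (· ≠ ·)

def TrapMatch (A B : Trapezoid) : Prop :=
  A.x2 < B.x2 ∧ (B.x1 ≤ A.x2 ∨ B.y1 ≤ A.y2)

def TrapMatchLT (e e' : Trapezoid × Trapezoid) : Prop :=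
  max e.1.x2 e.2.x2 < min e'.1.x1 e'.2.x1 ∧ max e.1.y2 e.2.y2 < min e'.1.y1 e'.2.y1

def IsInducedMatching {V : Type*} (G : SimpleGraph V) (M : Set (Sym2 V)) : Prop :=
  M ⊆ G.edgeSet ∧
    ∀ e ∈ M, ∀ f ∈ M, e ≠ f → ∀ u ∈ e, ∀ v ∈ f, u ≠ v ∧ ¬ G.Adj u v
/-- `A` lies entirely to the left of and below `B`. -/
def Below (A B : Trapezoid) : Prop := A.x2 < B.x1 ∧ A.y2 < B.y1

lemma below_trans {A B C : Trapezoid} (h1 : Below A B) (h2 : Below B C) : Below A C :=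
  ⟨h1.1.trans (B.hx.trans_lt h2.1), h1.2.trans (B.hy.trans_lt h2.2)⟩

lemma below_not_intersect {A B : Trapezoid} (h : Below A B) : ¬ TrapIntersect A B := by
  obtain ⟨h1, h2⟩ := h
  rintro (hc | hc | hc | hc) <;> unfold SegCross at hc <;>
    nlinarith [A.hx, A.hy, B.hx, B.hy]

lemma below_not_intersect' {A B : Trapezoid} (h : Below B A) : ¬ TrapIntersect A B := by
  obtain ⟨h1, h2⟩ := h
  rintro (hc | hc | hc | hc) <;> unfold SegCross at hc <;>
    nlinarith [A.hx, A.hy, B.hx, B.hy]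

/-- Distinct non-intersecting trapezoids with distinct coordinates are comparable. -/
lemma below_comparable {A B : Trapezoid}
    (hx21 : A.x2 ≠ B.x1) (hx12 : A.x1 ≠ B.x2)
    (hy12 : A.y1 ≠ B.y2) (hy21 : A.y2 ≠ B.y1)
    (hni : ¬ TrapIntersect A B) : Below A B ∨ Below B A := by
  unfold TrapIntersect SegCross at hni
  push_neg at hni
  obtain ⟨n1, n2, n3, n4⟩ := hni
  rcases lt_or_gt_of_ne hx21 with h | h
  · left
    refine ⟨h, ?_⟩
    rcases lt_or_gt_of_ne hy21 with h' | h'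
    · exact h'
    · exfalso; nlinarith [A.hx, A.hy, B.hx, B.hy]
  · right
    have hy : B.y2 < A.y1 := by
      rcases lt_or_gt_of_ne hy12 with h' | h'
      · exfalso; nlinarith [A.hx, A.hy, B.hx, B.hy]
      · exact h'
    have hx : B.x2 < A.x1 := by
      rcases lt_or_gt_of_ne hx12 with h' | h'
      · exfalso; nlinarith [A.hx, A.hy, B.hx, B.hy]
      · exact h'
    exact ⟨hx, hy⟩

/-- A match between trapezoids with distinct coordinates yields an intersection. -/
lemma intersect_of_match {A B : Trapezoid}
    (hx21 : B.x1 ≠ A.x2) (hy12 : A.y1 ≠ B.y2) (hy21 : B.y1 ≠ A.y2)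
    (hm : TrapMatch A B) : TrapIntersect A B := by
  obtain ⟨hlt, hc⟩ := hm
  unfold TrapIntersect SegCross
  rcases hc with hc | hc
  · have hc' : B.x1 < A.x2 := lt_of_le_of_ne hc hx21
    rcases lt_or_gt_of_ne hy12 with h' | h'
    · exact Or.inr (Or.inr (Or.inl (by nlinarith)))
    · refine Or.inr (Or.inl ?_)
      have : A.x1 < B.x2 := lt_of_le_of_lt A.hx hlt
      nlinarith [A.hy, B.hy]
  · have hc' : B.y1 < A.y2 := lt_of_le_of_ne hc hy21
    refine Or.inr (Or.inl ?_)
    have : A.x1 < B.x2 := lt_of_le_of_lt A.hx hlt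
    nlinarith

/-- An intersecting pair, ordered by right endpoint, is a match. -/
lemma match_of_intersect {A B : Trapezoid} (hi : TrapIntersect A B)
    (hlt : A.x2 < B.x2) : TrapMatch A B := by
  refine ⟨hlt, ?_⟩
  by_contra hc
  push_neg at hc
  exact below_not_intersect ⟨hc.1, hc.2⟩ hi
/-- Extract the individual disequalities from `DistinctCoords`. -/
lemma distinct_coords_ne {τ : Set Trapezoid} (hτ : DistinctCoords τ)
    {A B : Trapezoid} (hA : A ∈ τ) (hB : B ∈ τ) (hne : A ≠ B) :
    (A.x1 ≠ B.x1 ∧ A.x1 ≠ B.x2 ∧ A.x2 ≠ B.x1 ∧ A.x2 ≠ B.x2) ∧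
    (A.y1 ≠ B.y1 ∧ A.y1 ≠ B.y2 ∧ A.y2 ≠ B.y1 ∧ A.y2 ≠ B.y2) := by
  obtain ⟨hx, hy⟩ := hτ A hA B hB hne
  simp only [List.pairwise_cons, List.mem_cons, List.not_mem_nil] at hx hy
  refine ⟨⟨?_, ?_, ?_, ?_⟩, ⟨?_, ?_, ?_, ?_⟩⟩
  · exact hx.1 B.x1 (by simp)
  · exact hx.1 B.x2 (by simp)
  · exact hx.2.1 B.x1 (by simp)
  · exact hx.2.1 B.x2 (by simp)
  · exact hy.1 B.y1 (by simp)
  · exact hy.1 B.y2 (by simp)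
  · exact hy.2.1 B.y1 (by simp)
  · exact hy.2.1 B.y2 (by simp)

/-- Two totally non-adjacent intersecting pairs are separated in a consistent direction. -/
lemma pairs_separated {τ : Set Trapezoid} (hτ : DistinctCoords τ)
    {A B C D : Trapezoid} (hA : A ∈ τ) (hB : B ∈ τ) (hC : C ∈ τ) (hD : D ∈ τ)
    (hAB : TrapIntersect A B) (hCD : TrapIntersect C D)
    (hAC : A ≠ C ∧ ¬ TrapIntersect A C) (hAD : A ≠ D ∧ ¬ TrapIntersect A D)
    (hBC : B ≠ C ∧ ¬ TrapIntersect B C) (hBD : B ≠ D ∧ ¬ TrapIntersect B D) :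
    (Below A C ∧ Below A D ∧ Below B C ∧ Below B D) ∨
    (Below C A ∧ Below C B ∧ Below D A ∧ Below D B) := by
  have cmp : ∀ {X Y : Trapezoid}, X ∈ τ → Y ∈ τ → X ≠ Y → ¬ TrapIntersect X Y →
      Below X Y ∨ Below Y X := by
    intro X Y hX hY hne hni
    obtain ⟨⟨_, e2, e3, _⟩, ⟨_, f2, f3, _⟩⟩ := distinct_coords_ne hτ hX hY hne
    exact below_comparable e3 e2 f2 f3 hni
  have nAB : ¬ Below A B := fun h => below_not_intersect h hAB
  have nBA : ¬ Below B A := fun h => below_not_intersect' h hAB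
  have nCD : ¬ Below C D := fun h => below_not_intersect h hCD
  have nDC : ¬ Below D C := fun h => below_not_intersect' h hCD
  have cAC := cmp hA hC hAC.1 hAC.2
  have cAD := cmp hA hD hAD.1 hAD.2
  have cBC := cmp hB hC hBC.1 hBC.2
  have cBD := cmp hB hD hBD.1 hBD.2
  rcases cAC with h | h
  · left
    have hBC' : Below B C := by
      rcases cBC with h' | h'
      · exact h'
      · exact absurd (below_trans h h') nAB
    have hAD' : Below A D := by
      rcases cAD with h' | h'
      · exact h'
      · exact absurd (below_trans h' h) nDC
    have hBD' : Below B D := by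
      rcases cBD with h' | h'
      · exact h'
      · exact absurd (below_trans h' hBC') nDC
    exact ⟨h, hAD', hBC', hBD'⟩
  · right
    have hDA : Below D A := by
      rcases cAD with h' | h'
      · exact absurd (below_trans h h') nCD
      · exact h'
    have hCB : Below C B := by
      rcases cBC with h' | h'
      · exact absurd (below_trans h' h) nBA
      · exact h'
    have hDB : Below D B := by
      rcases cBD with h' | h'
      · exact absurd (below_trans h' hDA) nBA
      · exact h'
    exact ⟨h, hCB, hDA, hDB⟩
lemma below_ne {A B : Trapezoid} (h : Below A B) : A ≠ B := by
  rintro rfl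
  exact absurd (h.1.trans_le A.hx) (lt_irrefl _)

lemma trapMatchLT_trans {p q r : Trapezoid × Trapezoid}
    (h1 : TrapMatchLT p q) (h2 : TrapMatchLT q r) : TrapMatchLT p r := by
  obtain ⟨a1, a2⟩ := h1
  obtain ⟨b1, b2⟩ := h2
  constructor
  · calc max p.1.x2 p.2.x2 < min q.1.x1 q.2.x1 := a1
      _ ≤ q.1.x1 := min_le_left _ _
      _ ≤ q.1.x2 := q.1.hx
      _ ≤ max q.1.x2 q.2.x2 := le_max_left _ _
      _ < min r.1.x1 r.2.x1 := b1
  · calc max p.1.y2 p.2.y2 < min q.1.y1 q.2.y1 := a2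
      _ ≤ q.1.y1 := min_le_left _ _
      _ ≤ q.1.y2 := q.1.hy
      _ ≤ max q.1.y2 q.2.y2 := le_max_left _ _
      _ < min r.1.y1 r.2.y1 := b2

lemma trapMatchLT_below {A B C D : Trapezoid} (h : TrapMatchLT (A, B) (C, D)) :
    Below A C ∧ Below A D ∧ Below B C ∧ Below B D := by
  obtain ⟨h1, h2⟩ := h
  simp only [max_lt_iff, lt_min_iff] at h1 h2
  exact ⟨⟨h1.1.1, h2.1.1⟩, ⟨h1.2.1, h2.2.1⟩, ⟨h1.1.2, h2.1.2⟩, ⟨h1.2.2, h2.2.2⟩⟩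

lemma trapMatchLT_of_below {A B C D : Trapezoid} (h1 : Below A C) (h2 : Below A D)
    (h3 : Below B C) (h4 : Below B D) : TrapMatchLT (A, B) (C, D) := by
  constructor
  · simp only [max_lt_iff, lt_min_iff]
    exact ⟨⟨h1.1, h3.1⟩, ⟨h2.1, h4.1⟩⟩
  · simp only [max_lt_iff, lt_min_iff]
    exact ⟨⟨h1.2, h3.2⟩, ⟨h2.2, h4.2⟩⟩

/-- From a chain of matches we get an induced matching of the same size. -/
lemma chain_to_matching {τ : Set Trapezoid} (hτ : DistinctCoords τ) (k : ℕ)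
    (e : ℕ → τ × τ)
    (hm : ∀ i < k, TrapMatch ((e i).1 : Trapezoid) ((e i).2 : Trapezoid))
    (hlt : ∀ i, i + 1 < k →
      TrapMatchLT (((e i).1 : Trapezoid), ((e i).2 : Trapezoid))
        (((e (i + 1)).1 : Trapezoid), ((e (i + 1)).2 : Trapezoid))) :
    ∃ M : Finset (Sym2 τ), IsInducedMatching (trapGraph τ) ↑M ∧ M.card = k := by
  classical
  -- separation of arbitrary pairs in the chain
  have sep : ∀ j, j < k → ∀ i, i < j →
      TrapMatchLT (((e i).1 : Trapezoid), ((e i).2 : Trapezoid))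
        (((e j).1 : Trapezoid), ((e j).2 : Trapezoid)) := by
    intro j
    induction j with
    | zero => intro _ i h; omega
    | succ n ih =>
      intro hjk i hij
      rcases Nat.lt_succ_iff_lt_or_eq.mp hij with h | h
      · exact trapMatchLT_trans (ih (by omega) i h) (hlt n hjk)
      · subst h; exact hlt i hjk
  -- the i-th pair is adjacent in the graph
  have adj : ∀ i, i < k → (trapGraph τ).Adj (e i).1 (e i).2 := by
    intro i hi
    have hM := hm i hi
    have hne : (e i).1 ≠ (e i).2 := by
      intro h
      rw [h] at hM
      exact absurd hM.1 (lt_irrefl _)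
    have hnv : ((e i).1 : Trapezoid) ≠ ((e i).2 : Trapezoid) :=
      fun h => hne (Subtype.ext h)
    obtain ⟨⟨_, _, e3, _⟩, ⟨_, f2, f3, _⟩⟩ :=
      distinct_coords_ne hτ (e i).1.2 (e i).2.2 hnv
    exact ⟨hne, intersect_of_match (Ne.symm e3) f2 (Ne.symm f3) hM⟩
  -- separation between elements of pairs at distinct indices
  have sep' : ∀ i j, i < k → j < k → i ≠ j → ∀ u v : τ,
      (u = (e i).1 ∨ u = (e i).2) → (v = (e j).1 ∨ v = (e j).2) →
      Below (u : Trapezoid) v ∨ Below (v : Trapezoid) u := by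
    intro i j hik hjk hij u v hu hv
    rcases Nat.lt_or_ge i j with h | h
    · left
      have := trapMatchLT_below (sep j hjk i h)
      rcases hu with rfl | rfl <;> rcases hv with rfl | rfl <;> tauto
    · right
      have hji : j < i := by omega
      have := trapMatchLT_below (sep i hik j hji)
      rcases hu with rfl | rfl <;> rcases hv with rfl | rfl <;> tauto
  refine ⟨(Finset.range k).image (fun i => s((e i).1, (e i).2)), ⟨?_, ?_⟩, ?_⟩
  · -- subset of edge set
    intro z hz
    simp only [Finset.coe_image, Finset.coe_range, Set.mem_image, Set.mem_Iio] at hz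
    obtain ⟨i, hi, rfl⟩ := hz
    exact (trapGraph τ).mem_edgeSet.mpr (adj i hi)
  · -- induced matching property
    intro z hz w hw hzw u hu v hv
    simp only [Finset.coe_image, Finset.coe_range, Set.mem_image, Set.mem_Iio] at hz hw
    obtain ⟨i, hi, rfl⟩ := hz
    obtain ⟨j, hj, rfl⟩ := hw
    have hij : i ≠ j := by rintro rfl; exact hzw rfl
    rw [Sym2.mem_iff] at hu hv
    have hbel := sep' i j hi hj hij u v hu hv
    have hne : u ≠ v := by
      rcases hbel with h | h
      · exact fun hc => below_ne h (congrArg Subtype.val hc)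
      · exact fun hc => below_ne h (congrArg Subtype.val hc).symm
    refine ⟨hne, ?_⟩
    intro hadj
    rcases hbel with h | h
    · exact below_not_intersect h hadj.2
    · exact below_not_intersect' h hadj.2
  · -- cardinality
    rw [Finset.card_image_of_injOn, Finset.card_range]
    intro i hi j hj hij
    simp only [Finset.mem_coe, Finset.mem_range] at hi hj
    by_contra hne
    simp only at hij
    have h1 : (e i).1 ∈ s((e j).1, (e j).2) := by
      rw [← hij]; exact Sym2.mem_mk_left _ _
    rw [Sym2.mem_iff] at h1
    rcases h1 with h1 | h1
    · rcases sep' i j hi hj hne (e i).1 (e j).1 (Or.inl rfl) (Or.inl rfl) with h | h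
      · exact absurd (congrArg Subtype.val h1) (below_ne h)
      · exact absurd (congrArg Subtype.val h1).symm (below_ne h)
    · rcases sep' i j hi hj hne (e i).1 (e j).2 (Or.inl rfl) (Or.inr rfl) with h | h
      · exact absurd (congrArg Subtype.val h1) (below_ne h)
      · exact absurd (congrArg Subtype.val h1).symm (below_ne h)
/-- The key used to sort edges: the smaller left `x`-coordinate. -/
noncomputable def edgeKey {τ : Set Trapezoid} : Sym2 τ → ℝ :=
  Sym2.lift ⟨fun u v => min (u : Trapezoid).x1 (v : Trapezoid).x1,
    fun _ _ => min_comm _ _⟩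

lemma edgeKey_mk {τ : Set Trapezoid} (u v : τ) :
    edgeKey s(u, v) = min (u : Trapezoid).x1 (v : Trapezoid).x1 := rfl

/-- From an induced matching we get a chain of matches of the same length. -/
lemma matching_to_chain {τ : Set Trapezoid} (hτ : DistinctCoords τ) (t0 : τ) (k : ℕ)
    (M : Finset (Sym2 τ)) (hM : IsInducedMatching (trapGraph τ) ↑M) (hk : M.card = k) :
    ∃ e : ℕ → τ × τ,
      (∀ i < k, TrapMatch ((e i).1 : Trapezoid) ((e i).2 : Trapezoid)) ∧
      (∀ i, i + 1 < k →
        TrapMatchLT (((e i).1 : Trapezoid), ((e i).2 : Trapezoid))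
          (((e (i + 1)).1 : Trapezoid), ((e (i + 1)).2 : Trapezoid))) := by
  classical
  obtain ⟨hsub, hind⟩ := hM
  -- orient each edge so that the first endpoint has smaller right x-coordinate
  have orient : ∀ z ∈ M, ∃ p : τ × τ, z = s(p.1, p.2) ∧
      ((p.1 : Trapezoid).x2 < (p.2 : Trapezoid).x2) := by
    intro z
    induction z using Sym2.ind with
    | _ u v =>
      intro hz
      have hadj : (trapGraph τ).Adj u v := (trapGraph τ).mem_edgeSet.mp (hsub hz)
      have hnv : (u : Trapezoid) ≠ (v : Trapezoid) := fun h => hadj.1 (Subtype.ext h)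
      obtain ⟨⟨_, _, _, e4⟩, _⟩ := distinct_coords_ne hτ u.2 v.2 hnv
      rcases lt_or_gt_of_ne e4 with h | h
      · exact ⟨(u, v), rfl, h⟩
      · exact ⟨(v, u), Sym2.eq_swap, h⟩
  choose g hg1 hg2 using orient
  -- adjacency of the endpoints of each oriented edge
  have gadj : ∀ z (hz : z ∈ M), (trapGraph τ).Adj (g z hz).1 (g z hz).2 := by
    intro z hz
    have := hsub hz
    rw [hg1 z hz] at this
    exact (trapGraph τ).mem_edgeSet.mp this
  -- key of an edge in terms of its oriented pair
  have hkey : ∀ z (hz : z ∈ M), edgeKey z =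
      min ((g z hz).1 : Trapezoid).x1 ((g z hz).2 : Trapezoid).x1 := by
    intro z hz
    conv_lhs => rw [hg1 z hz]
    exact edgeKey_mk _ _
  -- separation of distinct edges, with direction given by the key
  have hsep : ∀ z (hz : z ∈ M), ∀ w (hw : w ∈ M), z ≠ w →
      (TrapMatchLT (((g z hz).1 : Trapezoid), ((g z hz).2 : Trapezoid))
          (((g w hw).1 : Trapezoid), ((g w hw).2 : Trapezoid)) ∧ edgeKey z < edgeKey w) ∨
      (TrapMatchLT (((g w hw).1 : Trapezoid), ((g w hw).2 : Trapezoid))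
          (((g z hz).1 : Trapezoid), ((g z hz).2 : Trapezoid)) ∧ edgeKey w < edgeKey z) := by
    intro z hz w hw hzw
    set A := (g z hz).1 with hA
    set B := (g z hz).2 with hB
    set C := (g w hw).1 with hC
    set D := (g w hw).2 with hD
    have hmemz : ∀ u : τ, (u = A ∨ u = B) → u ∈ z := by
      intro u hu
      rw [hg1 z hz, Sym2.mem_iff]
      exact hu
    have hmemw : ∀ v : τ, (v = C ∨ v = D) → v ∈ w := by
      intro v hv
      rw [hg1 w hw, Sym2.mem_iff]
      exact hv
    have cross : ∀ u v : τ, (u = A ∨ u = B) → (v = C ∨ v = D) →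
        (u : Trapezoid) ≠ (v : Trapezoid) ∧ ¬ TrapIntersect (u : Trapezoid) v := by
      intro u v hu hv
      obtain ⟨hne, hnadj⟩ := hind z hz w hw hzw u (hmemz u hu) v (hmemw v hv)
      refine ⟨fun h => hne (Subtype.ext h), fun hi => hnadj ⟨hne, hi⟩⟩
    have hAB : TrapIntersect (A : Trapezoid) B := (gadj z hz).2
    have hCD : TrapIntersect (C : Trapezoid) D := (gadj w hw).2
    have := pairs_separated hτ A.2 B.2 C.2 D.2 hAB hCD
      (cross A C (Or.inl rfl) (Or.inl rfl)) (cross A D (Or.inl rfl) (Or.inr rfl))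
      (cross B C (Or.inr rfl) (Or.inl rfl)) (cross B D (Or.inr rfl) (Or.inr rfl))
    rcases this with ⟨h1, h2, h3, h4⟩ | ⟨h1, h2, h3, h4⟩
    · left
      refine ⟨trapMatchLT_of_below h1 h2 h3 h4, ?_⟩
      rw [hkey z hz, hkey w hw, ← hA, ← hB, ← hC, ← hD]
      refine lt_min_iff.mpr ⟨?_, ?_⟩
      · exact (min_le_left _ _).trans_lt ((A : Trapezoid).hx.trans_lt h1.1)
      · exact (min_le_left _ _).trans_lt ((A : Trapezoid).hx.trans_lt h2.1)
    · right
      refine ⟨trapMatchLT_of_below h1 h2 h3 h4, ?_⟩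
      rw [hkey z hz, hkey w hw, ← hA, ← hB, ← hC, ← hD]
      refine lt_min_iff.mpr ⟨?_, ?_⟩
      · exact (min_le_left _ _).trans_lt ((C : Trapezoid).hx.trans_lt h1.1)
      · exact (min_le_left _ _).trans_lt ((C : Trapezoid).hx.trans_lt h2.1)
  -- sorted enumeration of the edges via the key
  have hinj : Set.InjOn edgeKey (M : Set (Sym2 τ)) := by
    intro z hz w hw h
    by_contra hne
    rcases hsep z hz w hw hne with ⟨_, hlt⟩ | ⟨_, hlt⟩
    · exact absurd h hlt.ne
    · exact absurd h.symm hlt.ne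
  have hNcard : (M.image edgeKey).card = k := by
    rw [Finset.card_image_of_injOn hinj, hk]
  let o := (M.image edgeKey).orderIsoOfFin hNcard
  have hrep : ∀ i : Fin k, ∃ z, ∃ _ : z ∈ M, edgeKey z = (o i : ℝ) := by
    intro i
    have : (o i : ℝ) ∈ M.image edgeKey := (o i).2
    rw [Finset.mem_image] at this
    obtain ⟨z, hz, hzk⟩ := this
    exact ⟨z, hz, hzk⟩
  choose zed hzmem hzkey using hrep
  refine ⟨fun i => if h : i < k then g (zed ⟨i, h⟩) (hzmem ⟨i, h⟩) else (t0, t0), ?_, ?_⟩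
  · intro i hi
    simp only [dif_pos hi]
    have hadj := gadj (zed ⟨i, hi⟩) (hzmem ⟨i, hi⟩)
    exact match_of_intersect hadj.2 (hg2 _ _)
  · intro i hi
    have hi' : i < k := by omega
    simp only [dif_pos hi, dif_pos hi']
    set i1 : Fin k := ⟨i, hi'⟩
    set i2 : Fin k := ⟨i + 1, hi⟩
    have hklt : edgeKey (zed i1) < edgeKey (zed i2) := by
      rw [hzkey i1, hzkey i2]
      exact Subtype.coe_lt_coe.mpr (o.lt_iff_lt.mpr (by simp [i1, i2]))
    have hne : zed i1 ≠ zed i2 := fun h => by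
      rw [h] at hklt; exact absurd hklt (lt_irrefl _)
    rcases hsep (zed i1) (hzmem i1) (zed i2) (hzmem i2) hne with ⟨h, _⟩ | ⟨_, h⟩
    · exact h
    · exact absurd hklt (not_lt.mpr h.le)
/-- The maximum size of an induced matching in the trapezoid graph `G(τ)` equals the
maximum length of a chain of matches under the order `TrapMatchLT`. -/
theorem stmt_13 (τ : Set Trapezoid) (hτ : DistinctCoords τ) :
    sSup {k : ℕ | ∃ M : Finset (Sym2 τ),
        IsInducedMatching (trapGraph τ) ↑M ∧ M.card = k} =
      sSup {k : ℕ | ∃ e : ℕ → τ × τ,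
        (∀ i < k, TrapMatch ((e i).1 : Trapezoid) ((e i).2 : Trapezoid)) ∧
        (∀ i, i + 1 < k →
          TrapMatchLT (((e i).1 : Trapezoid), ((e i).2 : Trapezoid))
            (((e (i + 1)).1 : Trapezoid), ((e (i + 1)).2 : Trapezoid)))} := by
  classical
  by_cases hne : Nonempty ↑τ
  · obtain ⟨t0⟩ := hne
    congr 1
    ext k
    simp only [Set.mem_setOf_eq]
    constructor
    · rintro ⟨M, hM, hk⟩
      exact matching_to_chain hτ t0 k M hM hk
    · rintro ⟨e, hm, hlt⟩
      exact chain_to_matching hτ k e hm hlt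
  · have h1 : {k : ℕ | ∃ M : Finset (Sym2 τ),
        IsInducedMatching (trapGraph τ) ↑M ∧ M.card = k} = {0} := by
      ext k
      simp only [Set.mem_setOf_eq, Set.mem_singleton_iff]
      constructor
      · rintro ⟨M, _, hk⟩
        have hMe : M = ∅ := by
          refine Finset.eq_empty_of_forall_notMem ?_
          intro z
          induction z using Sym2.ind with
          | _ u v => exact absurd ⟨u⟩ hne
        rw [hMe] at hk
        simpa using hk.symm
      · rintro rfl
        refine ⟨∅, ⟨?_, ?_⟩, by simp⟩
        · simp
        · intro e he
          simp at he
    have h2 : {k : ℕ | ∃ e : ℕ → τ × τ,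
        (∀ i < k, TrapMatch ((e i).1 : Trapezoid) ((e i).2 : Trapezoid)) ∧
        (∀ i, i + 1 < k →
          TrapMatchLT (((e i).1 : Trapezoid), ((e i).2 : Trapezoid))
            (((e (i + 1)).1 : Trapezoid), ((e (i + 1)).2 : Trapezoid)))} = ∅ := by
      ext k
      simp only [Set.mem_setOf_eq, Set.mem_empty_iff_false, iff_false]
      rintro ⟨e, -, -⟩
      exact hne ⟨(e 0).1⟩
    rw [h1, h2, csSup_singleton, csSup_empty]
    rfl
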